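/- If (v, w) is a pair of symmetric 4×4 complex matrices satisfying the G(3,6) relations, then rank w = 2 if and only if rank v = 2. -/

import Mathlib

/-- First element (in increasing order) of the complement of `{i, j}` in `{0, 1, 2, 3}`,
for `i < j` (junk value otherwise). -/
def cFst (i j : Fin 4) : Fin 4 :=
  if i = 0 ∧ j = 1 then 2
  else if i = 0 ∧ j = 2 then 1
  else if i = 0 ∧ j = 3 then 1
  else if i = 1 ∧ j = 2 then 0
  else if i = 1 ∧ j = 3 then 0
  else 0

/-- Second element (in increasing order) of the complement of `{i, j}` in `{0, 1, 2, 3}`,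
for `i < j` (junk value otherwise). -/
def cSnd (i j : Fin 4) : Fin 4 :=
  if i = 0 ∧ j = 1 then 3
  else if i = 0 ∧ j = 2 then 3
  else if i = 0 ∧ j = 3 then 2
  else if i = 1 ∧ j = 2 then 3
  else if i = 1 ∧ j = 3 then 2
  else 1

/-- Sign `ε(i,j)` of the permutation taking `(0,1,2,3)` to `(i, j, i', j')` where
`{i', j'}` is the complement of `{i, j}` listed in increasing order, for `i < j`. -/
def eps (i j : Fin 4) : ℂ :=
  if i = 0 ∧ j = 2 then -1 else if i = 1 ∧ j = 3 then -1 else 1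

/-- The `G(3,6)` relations for a pair of (symmetric) `4 × 4` complex matrices `(v, w)`:
(i) `v·w` is a scalar multiple of the identity; (ii) the `2 × 2` minors of `v` equal, up to
the signs `ε`, the complementary `2 × 2` minors of `w`. -/
def G36 (v w : Matrix (Fin 4) (Fin 4) ℂ) : Prop :=
  (∃ d : ℂ, v * w = d • (1 : Matrix (Fin 4) (Fin 4) ℂ)) ∧
  ∀ i j k l : Fin 4, i < j → k < l →
    v i k * v j l - v i l * v j k =
      eps i j * eps k l *
        (w (cFst i j) (cFst k l) * w (cSnd i j) (cSnd k l) -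
         w (cFst i j) (cSnd k l) * w (cSnd i j) (cFst k l))

section
open Matrix

lemma compFacts : ∀ i j : Fin 4, i < j →
    cFst i j < cSnd i j ∧ cFst (cFst i j) (cSnd i j) = i ∧ cSnd (cFst i j) (cSnd i j) = j := by
  decide

lemma epsComp : ∀ i j : Fin 4, i < j → eps (cFst i j) (cSnd i j) = eps i j := by
  intro i j h
  fin_cases i <;> fin_cases j <;> simp_all [eps, cFst, cSnd]

lemma eps_cases (i j : Fin 4) : eps i j = 1 ∨ eps i j = -1 := by
  unfold eps; split_ifs <;> simp

lemma eps_ne (i j : Fin 4) : eps i j ≠ 0 := by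
  rcases eps_cases i j with h | h <;> rw [h] <;> norm_num

/-- If all 2×2 minors vanish, the rank is at most 1. -/
lemma rank_le_one_of_minors (m : Matrix (Fin 4) (Fin 4) ℂ)
    (h : ∀ i j k l : Fin 4, m i k * m j l = m i l * m j k) : m.rank ≤ 1 := by
  rcases eq_or_ne m 0 with rfl | hne
  · simp [Matrix.rank_zero]
  · have : ∃ a b, m a b ≠ 0 := by
      by_contra hc
      push_neg at hc
      exact hne (by ext a b; exact hc a b)
    obtain ⟨a, b, hab⟩ := this
    rw [Matrix.rank_eq_finrank_span_cols]
    have hsub : Submodule.span ℂ (Set.range mᵀ) ≤ Submodule.span ℂ {mᵀ b} := by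
      rw [Submodule.span_le]
      rintro x ⟨c, rfl⟩
      apply Submodule.mem_span_singleton.mpr
      refine ⟨m a c / m a b, ?_⟩
      funext r
      have := h r a c b
      show m a c / m a b * m r b = m r c
      rw [div_mul_eq_mul_div, div_eq_iff hab]
      linear_combination - this
    calc Module.finrank ℂ ↥(Submodule.span ℂ (Set.range mᵀ))
        ≤ Module.finrank ℂ ↥(Submodule.span ℂ {mᵀ b}) := Submodule.finrank_mono hsub
      _ ≤ 1 := by
          simpa using finrank_span_le_card ({mᵀ b} : Set (Fin 4 → ℂ))

/-- A nonzero 2×2 minor forces rank at least 2. -/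
lemma two_le_rank_of_minor (m : Matrix (Fin 4) (Fin 4) ℂ) (i j k l : Fin 4)
    (h : m i k * m j l - m i l * m j k ≠ 0) : 2 ≤ m.rank := by
  have hmem : ∀ c : Fin 4, mᵀ c ∈ LinearMap.range m.mulVecLin := by
    intro c
    exact ⟨Pi.single c 1, by rw [Matrix.mulVecLin_apply, Matrix.mulVec_single_one]; rfl⟩
  have hli : LinearIndependent ℂ ![mᵀ k, mᵀ l] := by
    rw [LinearIndependent.pair_iff]
    intro s t hst
    have e1 : s * m i k + t * m i l = 0 := by
      have := congrFun hst i
      simpa using this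
    have e2 : s * m j k + t * m j l = 0 := by
      have := congrFun hst j
      simpa using this
    constructor
    · have hs : s * (m i k * m j l - m i l * m j k) = 0 := by
        linear_combination m j l * e1 - m i l * e2
      exact (mul_eq_zero.mp hs).resolve_right h
    · have ht : t * (m i k * m j l - m i l * m j k) = 0 := by
        linear_combination (- m j k) * e1 + m i k * e2
      exact (mul_eq_zero.mp ht).resolve_right h
  have hspan : Submodule.span ℂ (Set.range ![mᵀ k, mᵀ l]) ≤ LinearMap.range m.mulVecLin := by
    rw [Submodule.span_le]
    rintro x ⟨c, rfl⟩
    fin_cases c <;> simpa using hmem _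
  have h2 : Module.finrank ℂ ↥(Submodule.span ℂ (Set.range ![mᵀ k, mᵀ l])) = 2 := by
    rw [finrank_span_eq_card hli]
    simp
  rw [Matrix.rank]
  calc (2 : ℕ) = Module.finrank ℂ ↥(Submodule.span ℂ (Set.range ![mᵀ k, mᵀ l])) := h2.symm
    _ ≤ Module.finrank ℂ ↥(LinearMap.range m.mulVecLin) := Submodule.finrank_mono hspan

/-- One direction: `G36 v w` and `rank w = 2` imply `rank v = 2`. -/
lemma main_dir (v w : Matrix (Fin 4) (Fin 4) ℂ) (h : G36 v w) (hw2 : w.rank = 2) :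
    v.rank = 2 := by
  obtain ⟨⟨d, hd⟩, hm⟩ := h
  have hdetw : w.det = 0 := by
    by_contra hne
    have : w.rank = 4 := by
      rw [Matrix.rank_of_isUnit w ((Matrix.isUnit_iff_isUnit_det w).mpr
        (isUnit_iff_ne_zero.mpr hne))]
      simp
    omega
  have hd0 : d = 0 := by
    have hdet := congrArg Matrix.det hd
    rw [Matrix.det_mul, hdetw, Matrix.det_smul, Matrix.det_one, mul_zero] at hdet
    have : d ^ 4 = 0 := by
      simpa using hdet.symm
    exact pow_eq_zero_iff (by norm_num) |>.mp this
  have hvw0 : v * w = 0 := by rw [hd, hd0, zero_smul]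
  have hle : v.rank ≤ 2 := by
    have := Matrix.rank_add_rank_le_card_of_mul_eq_zero hvw0
    simp only [Fintype.card_fin] at this
    omega
  have hge : 2 ≤ v.rank := by
    have h2 : ∃ a b c e : Fin 4, a < b ∧ c < e ∧ w a c * w b e - w a e * w b c ≠ 0 := by
      by_contra hcon
      push_neg at hcon
      have step1 : ∀ a b c e : Fin 4, a < b → w a c * w b e = w a e * w b c := by
        intro a b c e hab
        rcases lt_trichotomy c e with h2 | h2 | h2
        · linear_combination hcon a b c e hab h2
        · subst h2; ring
        · linear_combination - hcon a b e c hab h2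
      have hall : ∀ a b c e : Fin 4, w a c * w b e = w a e * w b c := by
        intro a b c e
        rcases lt_trichotomy a b with h1 | h1 | h1
        · exact step1 a b c e h1
        · subst h1; ring
        · linear_combination - step1 b a c e h1
      have := rank_le_one_of_minors w hall
      omega
    obtain ⟨a, b, c, e, hab, hce, hne⟩ := h2
    obtain ⟨hlt, hf, hs⟩ := compFacts a b hab
    obtain ⟨hlt', hf', hs'⟩ := compFacts c e hce
    have H := hm _ _ _ _ hlt hlt'
    rw [hf, hs, hf', hs'] at H
    refine two_le_rank_of_minor v (cFst a b) (cSnd a b) (cFst c e) (cSnd c e) ?_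
    rw [H]
    exact mul_ne_zero (mul_ne_zero (eps_ne _ _) (eps_ne _ _)) hne
  omega

/-- The `G36` relations are symmetric in `(v, w)` for symmetric matrices. -/
lemma g36_symm (v w : Matrix (Fin 4) (Fin 4) ℂ)
    (hv : v.IsSymm) (hw : w.IsSymm) (h : G36 v w) : G36 w v := by
  obtain ⟨⟨d, hd⟩, hm⟩ := h
  constructor
  · refine ⟨d, ?_⟩
    calc w * v = (v * w)ᵀ := by rw [Matrix.transpose_mul, hv.eq, hw.eq]
      _ = (d • (1 : Matrix (Fin 4) (Fin 4) ℂ))ᵀ := by rw [hd]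
      _ = d • 1 := by rw [Matrix.transpose_smul, Matrix.transpose_one]
  · intro i j k l hij hkl
    obtain ⟨hlt, hf, hs⟩ := compFacts i j hij
    obtain ⟨hlt', hf', hs'⟩ := compFacts k l hkl
    have H := hm _ _ _ _ hlt hlt'
    rw [hf, hs, hf', hs', epsComp i j hij, epsComp k l hkl] at H
    rcases eps_cases i j with h1 | h1 <;> rcases eps_cases k l with h2 | h2 <;>
      rw [h1, h2] at H ⊢ <;> first
        | linear_combination H
        | linear_combination - H

/-- fact (I.4): if `(v, w)` is a pair of symmetric `4 × 4` complex matrices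
satisfying the `G(3,6)` relations, then `rank w = 2` iff `rank v = 2`. -/
theorem stmt13 (v w : Matrix (Fin 4) (Fin 4) ℂ)
    (hv : v.IsSymm) (hw : w.IsSymm) (h : G36 v w) :
    w.rank = 2 ↔ v.rank = 2 := by
  constructor
  · exact main_dir v w h
  · exact main_dir w v (g36_symm v w hv hw h)

end
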